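/- Schubert classes are unique: for each binary string λ with k ones, there is at most one GKM class α which is supported above λ (α_μ ≠ 0 implies μ ≥ λ in dominance order), has α_λ = ∏_{(i,j) ∈ inv(λ)} (y_j - y_i), and has every component α_μ homogeneous of degree l(λ). -/

import Mathlib

def ones (n : ℕ) (l : Fin n → Bool) : ℕ :=
  (Finset.univ.filter (fun i => l i = true)).card

def invCount (n : ℕ) (l : Fin n → Bool) : ℕ :=
  (Finset.univ.filter (fun p : Fin n × Fin n =>
    p.1 < p.2 ∧ l p.1 = true ∧ l p.2 = false)).card

def psum (n : ℕ) (l : Fin n → Bool) (j : ℕ) : ℕ :=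
  (Finset.univ.filter (fun i : Fin n => i.val < j ∧ l i = true)).card

/-- dominance order: `domLE n l l'` means `l ≤ l'`. -/
def domLE (n : ℕ) (l l' : Fin n → Bool) : Prop :=
  ∀ j : ℕ, psum n l j ≤ psum n l' j

/-- the identity string `0^{n-k} 1^k`. -/
def idStr (n k : ℕ) : Fin n → Bool := fun i => decide (n - k ≤ i.val)

/-- the divisor string `0^{n-k-1} 1 0 1^{k-1}`. -/
def dvStr (n k : ℕ) : Fin n → Bool :=
  fun i => decide (i.val = n - k - 1 ∨ n - k + 1 ≤ i.val)

open MvPolynomial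

noncomputable def invProd (n : ℕ) (l : Fin n → Bool) : MvPolynomial (Fin n) ℤ :=
  ∏ p ∈ Finset.univ.filter (fun p : Fin n × Fin n =>
      p.1 < p.2 ∧ l p.1 = true ∧ l p.2 = false), (X p.2 - X p.1)

/-- the GKM condition for a tuple of polynomials indexed by binary strings
(imposed on the strings with `k` ones). -/
def IsGKM (n k : ℕ) (α : (Fin n → Bool) → MvPolynomial (Fin n) ℤ) : Prop :=
  ∀ l : Fin n → Bool, ones n l = k → ∀ i j : Fin n,
    (X i - X j : MvPolynomial (Fin n) ℤ) ∣ (α l - α (l ∘ Equiv.swap i j))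

/-- `α` is supported above `l` in dominance order. -/
def SuppAbove (n k : ℕ) (α : (Fin n → Bool) → MvPolynomial (Fin n) ℤ)
    (l : Fin n → Bool) : Prop :=
  ∀ m : Fin n → Bool, ones n m = k → α m ≠ 0 → domLE n l m

/-- `S` is a family of equivariant Schubert classes. -/
def IsSchubertFamily (n k : ℕ)
    (S : (Fin n → Bool) → (Fin n → Bool) → MvPolynomial (Fin n) ℤ) : Prop :=
  ∀ l : Fin n → Bool, ones n l = k →
    IsGKM n k (S l) ∧ SuppAbove n k (S l) l ∧ S l l = invProd n l ∧
    ∀ m : Fin n → Bool, (S l m).IsHomogeneous (invCount n l)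

instance (n k : ℕ) : DecidablePred (fun l : Fin n → Bool => ones n l = k) :=
  fun _ => Nat.decEq _ _

/-- weight -/
def wgt (n : ℕ) (l : Fin n → Bool) : ℕ := ∑ j ∈ Finset.range (n+1), _root_.psum n l j

/-- both-true pair count -/
def tc (n : ℕ) (l : Fin n → Bool) : ℕ :=
  (Finset.univ.filter (fun p : Fin n × Fin n =>
    p.1 < p.2 ∧ l p.1 = true ∧ l p.2 = true)).card

lemma psum_eq_sum (n : ℕ) (l : Fin n → Bool) (j : ℕ) :
    _root_.psum n l j = ∑ i : Fin n, if i.val < j ∧ l i = true then 1 else 0 := by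
  rw [_root_.psum, Finset.card_filter]

lemma range_filter_lt (a m : ℕ) :
    (Finset.range m).filter (fun j => a < j) = Finset.Ico (a+1) m := by
  ext x; simp [Finset.mem_Ico]; omega

lemma wgt_eq (n : ℕ) (l : Fin n → Bool) :
    wgt n l = ones n l + (Finset.univ.filter
      (fun p : Fin n × Fin n => p.1 < p.2 ∧ l p.1 = true)).card := by
  have hcard : (Finset.univ.filter
      (fun p : Fin n × Fin n => p.1 < p.2 ∧ l p.1 = true)).card
      = ∑ i : Fin n, ∑ j : Fin n, if i < j ∧ l i = true then 1 else 0 := by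
    rw [Finset.card_filter, ← Finset.univ_product_univ, Finset.sum_product]
  rw [hcard, wgt]
  simp only [psum_eq_sum]
  rw [Finset.sum_comm, ones, Finset.card_filter, ← Finset.sum_add_distrib]
  refine Finset.sum_congr rfl ?_
  intro i _
  by_cases h : l i = true
  · simp only [h, and_true]
    have h1 : ∑ j ∈ Finset.range (n+1), (if i.val < j then 1 else 0)
        = (Finset.Ico (i.val+1) (n+1)).card := by
      rw [← range_filter_lt, Finset.card_filter]
    have h2 : ∑ j : Fin n, (if i < j then 1 else 0) = (Finset.Ico (i.val+1) n).card := by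
      have hh : ∀ j : Fin n, (if i < j then (1:ℕ) else 0) = if i.val < j.val then 1 else 0 := by
        intro j
        rcases Nat.lt_or_ge i.val j.val with h | h
        · rw [if_pos h, if_pos (Fin.lt_def.mpr h)]
        · have h' : ¬ i < j := by rw [Fin.lt_def]; omega
          rw [if_neg h', if_neg (by omega)]
      rw [Finset.sum_congr rfl (fun j _ => hh j)]
      rw [Fin.sum_univ_eq_sum_range (fun j => if i.val < j then (1:ℕ) else 0) n,
        ← range_filter_lt, Finset.card_filter]
    rw [h1, h2, Nat.card_Ico, Nat.card_Ico]
    have := i.isLt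
    simp only [if_true]
    omega
  · simp [h]

lemma pc_split (n : ℕ) (l : Fin n → Bool) :
    (Finset.univ.filter
      (fun p : Fin n × Fin n => p.1 < p.2 ∧ l p.1 = true)).card
    = invCount n l + tc n l := by
  rw [invCount, tc]
  have := Finset.card_filter_add_card_filter_not
    (s := Finset.univ.filter (fun p : Fin n × Fin n => p.1 < p.2 ∧ l p.1 = true))
    (p := fun p => l p.2 = true)
  rw [Finset.filter_filter, Finset.filter_filter] at this
  rw [← this, add_comm]
  congr 1
  · congr 1; apply Finset.filter_congr; intro p _; simp; tauto
  · congr 1; apply Finset.filter_congr; intro p _; simp [and_assoc]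

lemma psum_succ (n : ℕ) (l : Fin n → Bool) (t : ℕ) (ht : t < n) :
    _root_.psum n l (t+1) = _root_.psum n l t + (if l ⟨t, ht⟩ = true then 1 else 0) := by
  rw [psum_eq_sum, psum_eq_sum]
  have key : ∀ i : Fin n, (if i.val < t+1 ∧ l i = true then (1:ℕ) else 0)
      = (if i.val < t ∧ l i = true then 1 else 0)
        + (if i = ⟨t, ht⟩ ∧ l i = true then 1 else 0) := by
    intro i
    by_cases hi : i = ⟨t, ht⟩
    · subst hi; simp
    · have : i.val ≠ t := fun h => hi (Fin.ext h)
      have h1 : (i.val < t+1 ∧ l i = true) ↔ (i.val < t ∧ l i = true) := by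
        constructor <;> (rintro ⟨a, b⟩; exact ⟨by omega, b⟩)
      rw [if_neg (show ¬(i = ⟨t, ht⟩ ∧ l i = true) by simp [hi]), if_congr h1 rfl rfl]
      omega
  rw [Finset.sum_congr rfl (fun i _ => key i), Finset.sum_add_distrib]
  congr 1
  have key2 : ∀ i : Fin n, (if i = ⟨t, ht⟩ ∧ l i = true then (1:ℕ) else 0)
      = if i = ⟨t, ht⟩ then (if l i = true then 1 else 0) else 0 := by
    intro i
    by_cases hi : i = ⟨t, ht⟩ <;> simp [hi]
  rw [Finset.sum_congr rfl (fun i _ => key2 i),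
    Finset.sum_ite_eq' Finset.univ (⟨t, ht⟩ : Fin n) (fun i => if l i = true then (1:ℕ) else 0)]
  simp

lemma eq_of_psum_eq (n : ℕ) (l m : Fin n → Bool)
    (h : ∀ j ∈ Finset.range (n+1), _root_.psum n l j = _root_.psum n m j) : l = m := by
  funext i
  have hi := i.isLt
  have h1 := h i.val (Finset.mem_range.mpr (by omega))
  have h2 := h (i.val+1) (Finset.mem_range.mpr (by omega))
  have e1 := psum_succ n l i.val hi
  have e2 := psum_succ n m i.val hi
  have : (if l ⟨i.val, hi⟩ = true then (1:ℕ) else 0) = (if m ⟨i.val, hi⟩ = true then 1 else 0) := by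
    omega
  simp only [Fin.eta] at this
  by_cases hl : l i = true <;> by_cases hm : m i = true <;>
    simp [hl, hm] at this ⊢

lemma wgt_lt (n : ℕ) (l m : Fin n → Bool) (hle : domLE n l m) (hne : l ≠ m) :
    wgt n l < wgt n m := by
  apply Finset.sum_lt_sum (fun j _ => hle j)
  by_contra hc
  push_neg at hc
  exact hne (eq_of_psum_eq n l m (fun j hj => le_antisymm (hle j) (hc j hj)))

lemma tc_eq (n : ℕ) (l m : Fin n → Bool) (h : ones n l = ones n m) : tc n l = tc n m := by
  classical
  set s := Finset.univ.filter (fun i : Fin n => l i = true) with hs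
  set t := Finset.univ.filter (fun i : Fin n => m i = true) with htdef
  have hcard2 : s.card = t.card := h
  set es := s.orderIsoOfFin rfl with hes
  set et := t.orderIsoOfFin hcard2.symm with het
  set f : {x // x ∈ s} → {x // x ∈ t} := fun x => et (es.symm x) with hf
  set fi : {x // x ∈ t} → {x // x ∈ s} := fun x => es (et.symm x) with hfi
  have hmono : ∀ a b : {x // x ∈ s}, a < b → f a < f b := by
    intro a b hab
    rw [hf]; dsimp only
    rw [OrderIso.lt_iff_lt, OrderIso.lt_iff_lt]
    exact hab
  have hmono' : ∀ a b : {x // x ∈ t}, a < b → fi a < fi b := by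
    intro a b hab
    rw [hfi]; dsimp only
    rw [OrderIso.lt_iff_lt, OrderIso.lt_iff_lt]
    exact hab
  have hlinv : ∀ a, fi (f a) = a := by intro a; simp [hf, hfi]
  have hrinv : ∀ a, f (fi a) = a := by intro a; simp [hf, hfi]
  set g : Fin n → Fin n := fun x => if hx : x ∈ s then (f ⟨x, hx⟩ : Fin n) else x with hg
  set gi : Fin n → Fin n := fun x => if hx : x ∈ t then (fi ⟨x, hx⟩ : Fin n) else x with hgi
  have hmem_s : ∀ x : Fin n, x ∈ s ↔ l x = true := by intro x; simp [hs]
  have hmem_t : ∀ x : Fin n, x ∈ t ↔ m x = true := by intro x; simp [htdef]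
  rw [tc, tc]
  apply Finset.card_nbij' (fun p => (g p.1, g p.2)) (fun p => (gi p.1, gi p.2))
  · rintro ⟨a, b⟩ hab
    simp only [Finset.mem_coe, Finset.mem_filter, Finset.mem_univ, true_and] at hab ⊢
    obtain ⟨h1, h2, h3⟩ := hab
    have ha : a ∈ s := (hmem_s a).mpr h2
    have hb : b ∈ s := (hmem_s b).mpr h3
    have hga : g a = (f ⟨a, ha⟩ : Fin n) := by rw [hg]; dsimp only; rw [dif_pos ha]
    have hgb : g b = (f ⟨b, hb⟩ : Fin n) := by rw [hg]; dsimp only; rw [dif_pos hb]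
    refine ⟨?_, ?_, ?_⟩
    · rw [hga, hgb]
      exact Subtype.coe_lt_coe.mpr (hmono _ _ (Subtype.mk_lt_mk.mpr h1))
    · rw [hga]; exact (hmem_t _).mp (f ⟨a, ha⟩).2
    · rw [hgb]; exact (hmem_t _).mp (f ⟨b, hb⟩).2
  · rintro ⟨a, b⟩ hab
    simp only [Finset.mem_coe, Finset.mem_filter, Finset.mem_univ, true_and] at hab ⊢
    obtain ⟨h1, h2, h3⟩ := hab
    have ha : a ∈ t := (hmem_t a).mpr h2
    have hb : b ∈ t := (hmem_t b).mpr h3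
    have hga : gi a = (fi ⟨a, ha⟩ : Fin n) := by rw [hgi]; dsimp only; rw [dif_pos ha]
    have hgb : gi b = (fi ⟨b, hb⟩ : Fin n) := by rw [hgi]; dsimp only; rw [dif_pos hb]
    refine ⟨?_, ?_, ?_⟩
    · rw [hga, hgb]
      exact Subtype.coe_lt_coe.mpr (hmono' _ _ (Subtype.mk_lt_mk.mpr h1))
    · rw [hga]; exact (hmem_s _).mp (fi ⟨a, ha⟩).2
    · rw [hgb]; exact (hmem_s _).mp (fi ⟨b, hb⟩).2
  · rintro ⟨a, b⟩ hab
    simp only [Finset.mem_coe, Finset.mem_filter, Finset.mem_univ, true_and] at hab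
    obtain ⟨h1, h2, h3⟩ := hab
    have ha : a ∈ s := (hmem_s a).mpr h2
    have hb : b ∈ s := (hmem_s b).mpr h3
    have hga : g a = (f ⟨a, ha⟩ : Fin n) := by rw [hg]; dsimp only; rw [dif_pos ha]
    have hgb : g b = (f ⟨b, hb⟩ : Fin n) := by rw [hg]; dsimp only; rw [dif_pos hb]
    have hta : g a ∈ t := by rw [hga]; exact (f ⟨a, ha⟩).2
    have htb : g b ∈ t := by rw [hgb]; exact (f ⟨b, hb⟩).2
    have e1 : gi (g a) = a := by
      rw [hgi]; dsimp only; rw [dif_pos hta]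
      have : (⟨g a, hta⟩ : {x // x ∈ t}) = f ⟨a, ha⟩ := Subtype.ext hga
      rw [this, hlinv]
    have e2 : gi (g b) = b := by
      rw [hgi]; dsimp only; rw [dif_pos htb]
      have : (⟨g b, htb⟩ : {x // x ∈ t}) = f ⟨b, hb⟩ := Subtype.ext hgb
      rw [this, hlinv]
    simp [e1, e2]
  · rintro ⟨a, b⟩ hab
    simp only [Finset.mem_coe, Finset.mem_filter, Finset.mem_univ, true_and] at hab
    obtain ⟨h1, h2, h3⟩ := hab
    have ha : a ∈ t := (hmem_t a).mpr h2
    have hb : b ∈ t := (hmem_t b).mpr h3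
    have hga : gi a = (fi ⟨a, ha⟩ : Fin n) := by rw [hgi]; dsimp only; rw [dif_pos ha]
    have hgb : gi b = (fi ⟨b, hb⟩ : Fin n) := by rw [hgi]; dsimp only; rw [dif_pos hb]
    have hta : gi a ∈ s := by rw [hga]; exact (fi ⟨a, ha⟩).2
    have htb : gi b ∈ s := by rw [hgb]; exact (fi ⟨b, hb⟩).2
    have e1 : g (gi a) = a := by
      rw [hg]; dsimp only; rw [dif_pos hta]
      have : (⟨gi a, hta⟩ : {x // x ∈ s}) = fi ⟨a, ha⟩ := Subtype.ext hga
      rw [this, hrinv]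
    have e2 : g (gi b) = b := by
      rw [hg]; dsimp only; rw [dif_pos htb]
      have : (⟨gi b, htb⟩ : {x // x ∈ s}) = fi ⟨b, hb⟩ := Subtype.ext hgb
      rw [this, hrinv]
    simp [e1, e2]

lemma invCount_lt (n : ℕ) (l m : Fin n → Bool) (ho : ones n l = ones n m)
    (hle : domLE n l m) (hne : l ≠ m) : invCount n l < invCount n m := by
  have h1 := wgt_eq n l
  have h2 := wgt_eq n m
  rw [pc_split] at h1 h2
  have h3 := wgt_lt n l m hle hne
  have h4 := tc_eq n l m ho
  omega

lemma ones_swap (n : ℕ) (l : Fin n → Bool) (i j : Fin n) :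
    ones n (l ∘ Equiv.swap i j) = ones n l := by
  rw [ones, ones]
  apply Finset.card_nbij' (fun x => Equiv.swap i j x) (fun x => Equiv.swap i j x)
  · intro a ha; simp only [Finset.mem_coe, Finset.mem_filter, Finset.mem_univ, true_and,
      Function.comp_apply] at ha ⊢; exact ha
  · intro a ha; simp only [Finset.mem_coe, Finset.mem_filter, Finset.mem_univ, true_and,
      Function.comp_apply] at ha ⊢
    rwa [Equiv.swap_apply_self]
  · intro a _; simp
  · intro a _; simp

lemma domLE_swap (n : ℕ) (m : Fin n → Bool) (i j : Fin n) (hij : i < j)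
    (hmi : m i = true) (hmj : m j = false) : domLE n (m ∘ Equiv.swap i j) m := by
  intro t
  rw [psum_eq_sum, psum_eq_sum]
  have hne : i ≠ j := ne_of_lt hij
  set f : Fin n → ℕ := fun x => if x.val < t ∧ (m ∘ Equiv.swap i j) x = true then 1 else 0 with hf
  set g : Fin n → ℕ := fun x => if x.val < t ∧ m x = true then 1 else 0 with hg
  have hj' : j ∈ Finset.univ.erase i := Finset.mem_erase.mpr ⟨hne.symm, Finset.mem_univ j⟩
  have splitf : ∑ x, f x = ∑ x ∈ (Finset.univ.erase i).erase j, f x + f j + f i := by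
    rw [Finset.sum_erase_add _ _ hj', Finset.sum_erase_add _ _ (Finset.mem_univ i)]
  have splitg : ∑ x, g x = ∑ x ∈ (Finset.univ.erase i).erase j, g x + g j + g i := by
    rw [Finset.sum_erase_add _ _ hj', Finset.sum_erase_add _ _ (Finset.mem_univ i)]
  rw [splitf, splitg]
  have hsame : ∀ x ∈ (Finset.univ.erase i).erase j, f x = g x := by
    intro x hx
    rw [Finset.mem_erase, Finset.mem_erase] at hx
    rw [hf, hg]
    dsimp only
    rw [Function.comp_apply, Equiv.swap_apply_of_ne_of_ne hx.2.1 hx.1]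
  have hA : (∑ x ∈ (Finset.univ.erase i).erase j, f x)
      = ∑ x ∈ (Finset.univ.erase i).erase j, g x := Finset.sum_congr rfl hsame
  have hfj : f j = if j.val < t then 1 else 0 := by
    rw [hf]; dsimp only
    rw [Function.comp_apply, Equiv.swap_apply_right, hmi]
    simp
  have hfi : f i = 0 := by
    rw [hf]; dsimp only
    rw [Function.comp_apply, Equiv.swap_apply_left, hmj]
    simp
  have hgi : g i = if i.val < t then 1 else 0 := by rw [hg]; simp [hmi]
  have hgj : g j = 0 := by rw [hg]; simp [hmj]
  rw [hfj, hfi, hgi, hgj]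
  have : j.val < t → i.val < t := fun h => lt_trans (Fin.lt_def.mp hij) h
  split_ifs <;> omega

lemma swap_ne (n : ℕ) (m : Fin n → Bool) (i j : Fin n) (_hij : i ≠ j)
    (hmi : m i = true) (hmj : m j = false) : m ∘ Equiv.swap i j ≠ m := by
  intro h
  have := congrFun h i
  rw [Function.comp_apply, Equiv.swap_apply_left, hmj, hmi] at this
  exact Bool.false_ne_true this

lemma prime_X_sub_X (n : ℕ) (i j : Fin n) (hij : i ≠ j) :
    Prime (X i - X j : MvPolynomial (Fin n) ℤ) := by
  classical
  let e : Fin n ≃ Option {b : Fin n // b ≠ j} := (Equiv.optionSubtypeNe j).symm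
  let E := (renameEquiv ℤ e).trans (optionEquivLeft ℤ {b : Fin n // b ≠ j})
  rw [← MulEquiv.prime_iff E]
  have hEi : E (X i) = Polynomial.C (X ⟨i, hij⟩) := by
    show (optionEquivLeft ℤ _) (renameEquiv ℤ e (X i)) = _
    rw [renameEquiv_apply, rename_X]
    have : e i = some ⟨i, hij⟩ := Equiv.optionSubtypeNe_symm_of_ne hij
    rw [this, optionEquivLeft_X_some]
  have hEj : E (X j) = Polynomial.X := by
    show (optionEquivLeft ℤ _) (renameEquiv ℤ e (X j)) = _
    rw [renameEquiv_apply, rename_X]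
    have : e j = none := Equiv.optionSubtypeNe_symm_self j
    rw [this, optionEquivLeft_X_none]
  have : E (X i - X j) = -(Polynomial.X - Polynomial.C (X ⟨i, hij⟩)) := by
    rw [map_sub, hEi, hEj]; ring
  rw [this]
  exact (Polynomial.prime_X_sub_C _).neg

lemma not_dvd_X_sub_X (n : ℕ) (a b c d : Fin n) (hab : a < b) (hcd : c < d)
    (hne : (a, b) ≠ (c, d)) :
    ¬ (X b - X a : MvPolynomial (Fin n) ℤ) ∣ (X d - X c) := by
  rintro ⟨g, hg⟩
  have key : ∀ v : Fin n → ℤ, v a = v b → v d ≠ v c → False := by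
    intro v hva hvdc
    have h2 := congrArg (eval v) hg
    rw [map_sub, map_mul, map_sub, eval_X, eval_X, eval_X, eval_X, ← hva, sub_self,
      zero_mul] at h2
    exact hvdc (sub_eq_zero.mp h2)
  have hab' := Fin.lt_def.mp hab
  have hcd' := Fin.lt_def.mp hcd
  have hne' : ¬(a.val = c.val ∧ b.val = d.val) := by
    rintro ⟨h1, h2⟩; exact hne (Prod.ext (Fin.ext h1) (Fin.ext h2))
  by_cases hc : c ≠ a ∧ c ≠ b
  · apply key (fun x => if x = c then 1 else 0)
    · rw [if_neg (fun h => hc.1 h.symm), if_neg (fun h => hc.2 h.symm)]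
    · rw [if_neg (ne_of_gt hcd), if_pos rfl]; norm_num
  · push_neg at hc
    have hca : c.val = a.val ∨ c.val = b.val := by
      by_cases h1 : c = a
      · left; rw [h1]
      · right; rw [hc h1]
    have hd1 : d ≠ a := by intro h; have hv := congrArg Fin.val h; omega
    have hd2 : d ≠ b := by intro h; have hv := congrArg Fin.val h; omega
    apply key (fun x => if x = d then 1 else 0)
    · rw [if_neg (fun h => hd1 h.symm), if_neg (fun h => hd2 h.symm)]
    · rw [if_pos rfl, if_neg (ne_of_lt hcd)]; norm_num

lemma prod_primes_dvd' {R : Type*} [CommRing R] {ι : Type*} [DecidableEq ι] (s : Finset ι)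
    (f : ι → R) (x : R) (hp : ∀ i ∈ s, Prime (f i))
    (hnd : ∀ i ∈ s, ∀ j ∈ s, i ≠ j → ¬ f i ∣ f j)
    (hd : ∀ i ∈ s, f i ∣ x) : (∏ i ∈ s, f i) ∣ x := by
  classical
  induction s using Finset.induction_on generalizing x with
  | empty => simp
  | @insert a s' ha ih =>
    obtain ⟨y, hy⟩ := hd a (Finset.mem_insert_self a s')
    rw [Finset.prod_insert ha, hy]
    apply mul_dvd_mul_left
    apply ih
    · intro i hi; exact hp i (Finset.mem_insert_of_mem hi)
    · intro i hi j hj hij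
      exact hnd i (Finset.mem_insert_of_mem hi) j (Finset.mem_insert_of_mem hj) hij
    · intro i hi
      have hia : i ≠ a := fun h => ha (h ▸ hi)
      have hpi := hp i (Finset.mem_insert_of_mem hi)
      have := hd i (Finset.mem_insert_of_mem hi)
      rw [hy] at this
      rcases hpi.2.2 _ _ this with h | h
      · exact absurd h (hnd i (Finset.mem_insert_of_mem hi) a (Finset.mem_insert_self a s') hia)
      · exact h

lemma homog_le_of_dvd {n : ℕ} {P q : MvPolynomial (Fin n) ℤ} {c D : ℕ}
    (hP : P.IsHomogeneous c) (hD : (P * q).IsHomogeneous D) (hne : P * q ≠ 0) : c ≤ D := by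
  by_contra hlt
  push_neg at hlt
  obtain ⟨d, hd⟩ := ne_zero_iff.mp hne
  have hdeg : d.degree = D := by
    by_contra h
    exact hd (hD.coeff_eq_zero h)
  have hq : q = ∑ e ∈ Finset.range (q.totalDegree + 1), homogeneousComponent e q :=
    (sum_homogeneousComponent q).symm
  have : coeff d (P * q) = 0 := by
    conv_lhs => rw [hq]
    rw [Finset.mul_sum, coeff_sum]
    apply Finset.sum_eq_zero
    intro e _
    apply (hP.mul (homogeneousComponent_isHomogeneous e q)).coeff_eq_zero
    rw [hdeg]
    omega
  exact hd this

/-- Schubert classes are unique: there is at most one GKM class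
supported above `λ`, restricting at `λ` to `∏_{(i,j)∈inv(λ)}(yⱼ-yᵢ)`, with all
components homogeneous of degree `l(λ)`. -/
theorem stmt7 (n k : ℕ) (lam : Fin n → Bool) (hlam : ones n lam = k)
    (α β : (Fin n → Bool) → MvPolynomial (Fin n) ℤ)
    (hα : IsGKM n k α) (hβ : IsGKM n k β)
    (hαs : SuppAbove n k α lam) (hβs : SuppAbove n k β lam)
    (hαr : α lam = invProd n lam) (hβr : β lam = invProd n lam)
    (hαh : ∀ m, ones n m = k → (α m).IsHomogeneous (invCount n lam))
    (hβh : ∀ m, ones n m = k → (β m).IsHomogeneous (invCount n lam)) :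
    ∀ m, ones n m = k → α m = β m := by
  suffices main : ∀ c : ℕ, ∀ m, ones n m = k → invCount n m = c → α m - β m = 0 by
    intro m hm
    exact sub_eq_zero.mp (main (invCount n m) m hm rfl)
  intro c
  induction c using Nat.strong_induction_on with
  | _ c IH =>
  intro m hm hc
  by_contra hne0
  have hγdom : domLE n lam m := by
    by_cases hA : α m = 0
    · have hB : β m ≠ 0 := by intro h; apply hne0; rw [hA, h, sub_zero]
      exact hβs m hm hB
    · exact hαs m hm hA
  have hmlam : m ≠ lam := by rintro rfl; apply hne0; rw [hαr, hβr, sub_self]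
  have hlt : invCount n lam < invCount n m :=
    invCount_lt n lam m (by rw [hlam, hm]) hγdom (Ne.symm hmlam)
  set S := Finset.univ.filter (fun p : Fin n × Fin n =>
    p.1 < p.2 ∧ m p.1 = true ∧ m p.2 = false) with hS
  have hmemS : ∀ p : Fin n × Fin n, p ∈ S ↔ p.1 < p.2 ∧ m p.1 = true ∧ m p.2 = false := by
    intro p; rw [hS]; simp
  have hdvd : ∀ p ∈ S, (X p.2 - X p.1 : MvPolynomial (Fin n) ℤ) ∣ (α m - β m) := by
    intro p hp
    obtain ⟨h12, hm1, hm2⟩ := (hmemS p).mp hp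
    set m' := m ∘ Equiv.swap p.1 p.2 with hm'
    have hones' : ones n m' = k := by rw [hm', ones_swap, hm]
    have hdom' : domLE n m' m := domLE_swap n m p.1 p.2 h12 hm1 hm2
    have hne' : m' ≠ m := swap_ne n m p.1 p.2 (ne_of_lt h12) hm1 hm2
    have hlt' : invCount n m' < c :=
      hc ▸ invCount_lt n m' m (by rw [hones', hm]) hdom' hne'
    have hzero : α m' - β m' = 0 := IH _ hlt' m' hones' rfl
    have d1 := hα m hm p.1 p.2
    have d2 := hβ m hm p.1 p.2
    have hdd : (X p.1 - X p.2 : MvPolynomial (Fin n) ℤ)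
        ∣ ((α m - β m) - (α m' - β m')) := by
      have hre : (α m - α (m ∘ Equiv.swap p.1 p.2)) - (β m - β (m ∘ Equiv.swap p.1 p.2))
          = (α m - β m) - (α m' - β m') := by rw [hm']; ring
      rw [← hre]; exact dvd_sub d1 d2
    rw [hzero, sub_zero] at hdd
    have hneg : (X p.2 - X p.1 : MvPolynomial (Fin n) ℤ) = -(X p.1 - X p.2) := by ring
    rw [hneg]
    exact (neg_dvd).mpr hdd
  have hprod : (∏ p ∈ S, (X p.2 - X p.1 : MvPolynomial (Fin n) ℤ)) ∣ (α m - β m) := by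
    apply prod_primes_dvd'
    · intro p hp
      exact prime_X_sub_X n p.2 p.1 (ne_of_gt ((hmemS p).mp hp).1)
    · intro p hp q hq hpq
      obtain ⟨hp1, _, _⟩ := (hmemS p).mp hp
      obtain ⟨hq1, _, _⟩ := (hmemS q).mp hq
      apply not_dvd_X_sub_X n p.1 p.2 q.1 q.2 hp1 hq1
      intro h
      apply hpq
      obtain ⟨h1, h2⟩ := Prod.mk.injEq .. ▸ h
      exact Prod.ext h1 h2
    · exact hdvd
  have hPH : (∏ p ∈ S, (X p.2 - X p.1 : MvPolynomial (Fin n) ℤ)).IsHomogeneous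
      (invCount n m) := by
    have hh := MvPolynomial.IsHomogeneous.prod S
      (fun p : Fin n × Fin n => (X p.2 - X p.1 : MvPolynomial (Fin n) ℤ)) (fun _ => 1)
      (fun p _ => (isHomogeneous_X _ _).sub (isHomogeneous_X _ _))
    have hcard : ∑ _p ∈ S, 1 = invCount n m := by
      rw [Finset.sum_const, smul_eq_mul, mul_one, hS, invCount]
    rwa [hcard] at hh
  have hγH : (α m - β m).IsHomogeneous (invCount n lam) := (hαh m hm).sub (hβh m hm)
  obtain ⟨q, hq⟩ := hprod
  rw [hq] at hγH hne0
  have := homog_le_of_dvd hPH hγH hne0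
  omega
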